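/- Let η ≥ 5 be an odd integer and n, m integers. If n = 2^j n* and m = 2^j m* with n*, m* odd and j + 2 < η, then C_±(n,m;2^η) = ψ_±(n*m*)·2^j; in all other cases C_±(n,m;2^η) = 0. -/

import Mathlib

/-- `ψ₊` for parameter `η`: the trivial character (mod 2) if `η` is even, and `χ₈` if `η` is
odd, viewed as a function on `ℤ`. -/
noncomputable def psiPlus (η : ℕ) (a : ℤ) : ℤ :=
  if Even η then (if Odd a then 1 else 0) else ZMod.χ₈ (a : ZMod 8)

/-- `ψ₋ = ψ₊ · χ₋₄`. -/
noncomputable def psiMinus (η : ℕ) (a : ℤ) : ℤ :=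
  psiPlus η a * ZMod.χ₄ (a : ZMod 4)

/-- `Cpm ψ n m η = Σ_{a ∈ (ℤ/2^ηℤ)ˣ, a·n ≡ m (mod 2^η)} ψ(a)`. -/
noncomputable def Cpm (ψ : ℤ → ℤ) (n m : ℤ) (η : ℕ) : ℤ :=
  ∑ a ∈ Finset.range (2 ^ η),
    if Nat.Coprime a (2 ^ η) ∧ (a : ℤ) * n ≡ m [ZMOD ((2 : ℤ) ^ η)] then ψ a else 0

private lemma chi8_flip : ∀ x : ZMod 8, ZMod.χ₈ (x + 4) = - ZMod.χ₈ x := by decide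

private lemma chi8_sq : ∀ y : ZMod 8, ZMod.χ₈ (2*y+1) * ZMod.χ₈ (2*y+1) = 1 := by decide

private lemma chi4_sq : ∀ y : ZMod 4, ZMod.χ₄ (2*y+1) * ZMod.χ₄ (2*y+1) = 1 := by decide

private lemma cop_iff (η : ℕ) (hη : 1 ≤ η) (a : ℕ) : Nat.Coprime a (2^η) ↔ Odd a := by
  rw [Nat.coprime_pow_right_iff (by omega), Nat.coprime_comm,
    Nat.Prime.coprime_iff_not_dvd Nat.prime_two, Nat.odd_iff]
  omega

private lemma Cpm_vanish (ψ : ℤ → ℤ) (hflip : ∀ a : ℤ, ψ (a+4) = -ψ a)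
    (η : ℕ) (hη : 5 ≤ η) (n m : ℤ) (h : (2:ℤ)^η ∣ 4*n) :
    Cpm ψ n m η = 0 := by
  have h8 : (8:ℕ) ∣ 2^η := by
    have h3 : (2:ℕ)^3 ∣ 2^η := pow_dvd_pow 2 (by omega)
    simpa using h3
  have hPiff : ∀ a b : ℕ, b = a + 4 →
      ((Nat.Coprime a (2^η) ∧ (a : ℤ) * n ≡ m [ZMOD ((2 : ℤ) ^ η)]) ↔
       (Nat.Coprime b (2^η) ∧ (b : ℤ) * n ≡ m [ZMOD ((2 : ℤ) ^ η)])) := by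
    intro a b hb
    subst hb
    have hcop : Nat.Coprime a (2^η) ↔ Nat.Coprime (a+4) (2^η) := by
      rw [cop_iff η (by omega), cop_iff η (by omega), Nat.odd_iff, Nat.odd_iff]; omega
    have hmodeq : ((a:ℤ)+4) * n ≡ (a:ℤ) * n [ZMOD ((2 : ℤ) ^ η)] := by
      rw [Int.modEq_iff_dvd]
      have he : (a:ℤ)*n - ((a:ℤ)+4)*n = -(4*n) := by ring
      rw [he]
      exact dvd_neg.mpr h
    constructor
    · rintro ⟨h1, h2⟩
      exact ⟨hcop.mp h1, by push_cast; exact hmodeq.trans h2⟩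
    · rintro ⟨h1, h2⟩
      push_cast at h2
      exact ⟨hcop.mpr h1, hmodeq.symm.trans h2⟩
  unfold Cpm
  refine Finset.sum_involution (fun a _ => if a % 8 < 4 then a + 4 else a - 4) ?_ ?_ ?_ ?_
  · intro a ha
    by_cases hc : a % 8 < 4
    · simp only [if_pos hc]
      have hiff := hPiff a (a+4) rfl
      by_cases hp : Nat.Coprime a (2^η) ∧ (a : ℤ) * n ≡ m [ZMOD ((2 : ℤ) ^ η)]
      · rw [if_pos hp, if_pos (hiff.mp hp)]
        have hcast : ((a+4:ℕ):ℤ) = (a:ℤ) + 4 := by push_cast; ring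
        rw [hcast, hflip]; ring
      · rw [if_neg hp, if_neg (fun hh => hp (hiff.mpr hh))]; ring
    · simp only [if_neg hc]
      have ha4 : 4 ≤ a := by omega
      have hiff := hPiff (a-4) a (by omega)
      by_cases hp : Nat.Coprime a (2^η) ∧ (a : ℤ) * n ≡ m [ZMOD ((2 : ℤ) ^ η)]
      · rw [if_pos hp, if_pos (hiff.mpr hp)]
        have hcast : ((a:ℕ):ℤ) = ((a-4:ℕ):ℤ) + 4 := by
          have : ((a-4:ℕ):ℤ) = (a:ℤ) - 4 := by push_cast [ha4]; ring
          rw [this]; ring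
        rw [hcast, hflip]; ring
      · rw [if_neg hp, if_neg (fun hh => hp (hiff.mp hh))]; ring
  · intro a ha hfa
    split_ifs <;> omega
  · intro a ha
    simp only [Finset.mem_range] at ha ⊢
    split_ifs <;> omega
  · intro a ha
    split_ifs <;> omega

private lemma Cpm_eval (ψ : ℤ → ℤ)
    (hper : ∀ a b : ℤ, (8:ℤ) ∣ b - a → ψ a = ψ b)
    (hmul : ∀ a b : ℤ, ψ (a*b) = ψ a * ψ b)
    (hsq : ∀ a : ℤ, Odd a → ψ a * ψ a = 1)
    (η j : ℕ) (nstar mstar : ℤ)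
    (hn : Odd nstar) (hm : Odd mstar) (hj : j + 2 < η) :
    Cpm ψ (2^j * nstar) (2^j * mstar) η = ψ (nstar * mstar) * 2^j := by
  set d : ℕ := 2^(η-j) with hd
  have hdpos : 0 < d := pow_pos (by norm_num) _
  have hNd : 2^η = 2^j * d := by rw [hd, ← pow_add]; congr 1; omega
  have h8dN : (8:ℕ) ∣ d := by
    have h3 : (2:ℕ)^3 ∣ 2^(η-j) := pow_dvd_pow 2 (by omega)
    simpa [hd] using h3
  have h8d : (8:ℤ) ∣ (d:ℤ) := by exact_mod_cast h8dN
  obtain ⟨p, hp⟩ := id hn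
  have hcop2 : IsCoprime (2:ℤ) nstar := ⟨-p, 1, by rw [hp]; ring⟩
  have hcopd : IsCoprime ((d:ℤ)) nstar := by
    have h1 : IsCoprime ((2:ℤ)^(η-j)) nstar := hcop2.pow_left
    have h2 : ((d:ℕ):ℤ) = (2:ℤ)^(η-j) := by rw [hd]; push_cast; ring
    rwa [h2]
  obtain ⟨u, v, huv⟩ := hcopd.symm
  set r0 : ℤ := (u * mstar) % (d:ℤ) with hr0
  have hd0 : (0:ℤ) < d := by exact_mod_cast hdpos
  have hr0nonneg : 0 ≤ r0 := Int.emod_nonneg _ (ne_of_gt hd0)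
  have hr0lt : r0 < d := Int.emod_lt_of_pos _ hd0
  have hc1 : r0 - u*mstar = (d:ℤ) * (-(u*mstar / d)) := by
    rw [hr0, Int.emod_def]; ring
  have hdr : (d:ℤ) ∣ r0 * nstar - mstar :=
    ⟨(-(u*mstar / d))*nstar - v*mstar, by linear_combination nstar * hc1 + mstar * huv⟩
  have h2d : (2:ℤ) ∣ (d:ℤ) := dvd_trans (by norm_num) h8d
  have hr0odd : Odd r0 := by
    have h2 : (2:ℤ) ∣ r0*nstar - mstar := dvd_trans h2d hdr
    have hEv : Even (r0*nstar - mstar) := by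
      obtain ⟨c, hc⟩ := h2
      exact ⟨c, by omega⟩
    rw [Int.even_sub] at hEv
    have hmodd : ¬ Even mstar := Int.not_even_iff_odd.mpr hm
    have hOm : Odd (r0*nstar) := Int.not_even_iff_odd.mp (fun hh => hmodd (hEv.mp hh))
    exact (Int.odd_mul.mp hOm).1
  set r : ℕ := r0.toNat with hr
  have hrr0 : (r:ℤ) = r0 := Int.toNat_of_nonneg hr0nonneg
  have hrd : r < d := by omega
  have hrodd : Odd r := by
    rcases hr0odd with ⟨q, hq⟩
    rw [Nat.odd_iff]; omega
  have hset : (Finset.range (2^η)).filter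
      (fun a => Nat.Coprime a (2^η) ∧ (a:ℤ) * (2^j*nstar) ≡ 2^j*mstar [ZMOD ((2:ℤ)^η)])
      = (Finset.range (2^j)).image (fun k => r + k * d) := by
    ext a
    simp only [Finset.mem_filter, Finset.mem_image, Finset.mem_range]
    constructor
    · rintro ⟨haN, hcop, hmod⟩
      have hdvd : ((2:ℤ)^η) ∣ ((2:ℤ)^j*mstar) - (a:ℤ)*(2^j*nstar) := Int.ModEq.dvd hmod
      have hNe : ((2:ℤ)^η) = 2^j * (d:ℤ) := by
        have := congrArg (Nat.cast : ℕ → ℤ) hNd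
        push_cast at this
        simpa using this
      have h2 : ((d:ℤ)) ∣ mstar - (a:ℤ)*nstar := by
        rw [hNe] at hdvd
        have he : (2:ℤ)^j * (mstar - (a:ℤ)*nstar) = ((2:ℤ)^j*mstar) - (a:ℤ)*(2^j*nstar) := by ring
        rw [← he] at hdvd
        exact (mul_dvd_mul_iff_left (a := (2:ℤ)^j) (by positivity)).mp hdvd
      have h3 : (d:ℤ) ∣ (r0 - (a:ℤ)) * nstar := by
        have he : (r0 - (a:ℤ)) * nstar = (r0*nstar - mstar) + (mstar - (a:ℤ)*nstar) := by ring
        rw [he]; exact dvd_add hdr h2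
      obtain ⟨t, ht⟩ := hcopd.dvd_of_dvd_mul_right h3
      have haltN : ((a:ℤ)) < 2^j * d := by
        have h5 : (a:ℕ) < 2^j * d := by rw [← hNd]; exact haN
        exact_mod_cast h5
      have hs0 : 0 ≤ -t := by
      -- a = r0 - d*t ; if t ≥ 1 then a ≤ r0 - d < 0
        by_contra hcon
        push_neg at hcon
        have h5 : (1:ℤ) ≤ t := by omega
        have h6 : (d:ℤ) * 1 ≤ (d:ℤ) * t := mul_le_mul_of_nonneg_left h5 (le_of_lt hd0)
        have h7 : (0:ℤ) ≤ (a:ℤ) := Int.natCast_nonneg a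
        linarith
      have hslt : -t < 2^j := by
        by_contra hcon
        push_neg at hcon
        have h6 : (d:ℤ) * 2^j ≤ (d:ℤ) * (-t) := mul_le_mul_of_nonneg_left hcon (le_of_lt hd0)
        linarith
      refine ⟨(-t).toNat, ?_, ?_⟩
      · have h7 : ((-t).toNat : ℤ) = -t := Int.toNat_of_nonneg hs0
        have h8 : ((-t).toNat : ℤ) < ((2:ℤ))^j := by rw [h7]; exact hslt
        have h9 : ((2:ℕ)^j : ℤ) = (2:ℤ)^j := by push_cast; ring
        exact_mod_cast h9 ▸ h8
      · have h7 : ((r + (-t).toNat * d : ℕ) : ℤ) = (a:ℤ) := by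
          push_cast [hrr0, Int.toNat_of_nonneg hs0]
          linarith
        exact_mod_cast h7
    · rintro ⟨k, hk, rfl⟩
      have hdeven : 2 ∣ d := by omega
      refine ⟨?_, ?_, ?_⟩
      · calc r + k*d < d + k*d := by omega
          _ = (k+1)*d := by ring
          _ ≤ 2^j*d := Nat.mul_le_mul_right d (by omega)
          _ = 2^η := hNd.symm
      · rw [cop_iff η (by omega)]
        have hkd : Even (k*d) := (Nat.even_mul).mpr (Or.inr ⟨d/2, by omega⟩)
        exact (Nat.odd_add).mpr (iff_of_true hrodd hkd)
      · rw [Int.modEq_iff_dvd]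
        obtain ⟨c, hc⟩ := hdr
        have hNe : ((2:ℤ)^η) = 2^j * (d:ℤ) := by
          have := congrArg (Nat.cast : ℕ → ℤ) hNd
          push_cast at this
          simpa using this
        rw [hNe]
        refine ⟨-(c + (k:ℤ)*nstar), ?_⟩
        push_cast [hrr0]
        linear_combination (-(2:ℤ)^j) * hc
  unfold Cpm
  rw [← Finset.sum_filter]
  rw [hset]
  rw [Finset.sum_image (by
    intro x hx y hy hxy
    have : x * d = y * d := by beta_reduce at hxy; omega
    exact Nat.eq_of_mul_eq_mul_right hdpos this)]
  have hterm : ∀ k ∈ Finset.range (2^j), ψ ((r + k*d : ℕ) : ℤ) = ψ (nstar * mstar) := by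
    intro k _
    have e1 : ψ ((r + k*d : ℕ):ℤ) = ψ r0 := by
      refine (hper r0 ((r + k*d : ℕ):ℤ) ?_).symm
      have he : ((r + k*d : ℕ):ℤ) - r0 = (k:ℤ)*(d:ℤ) := by push_cast [hrr0]; ring
      rw [he]
      exact Dvd.dvd.mul_left h8d _
    have e2 : ψ r0 = ψ (nstar*mstar) := by
      have h8' : (8:ℤ) ∣ mstar - r0*nstar := by
        have := dvd_trans h8d hdr
        exact dvd_neg.mp (by rw [neg_sub]; exact this)
      have hE := hper (r0*nstar) mstar h8'
      rw [hmul] at hE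
      have hsqn := hsq nstar hn
      calc ψ r0 = ψ r0 * (ψ nstar * ψ nstar) := by rw [hsqn, mul_one]
        _ = (ψ r0 * ψ nstar) * ψ nstar := by ring
        _ = ψ mstar * ψ nstar := by rw [hE]
        _ = ψ (nstar * mstar) := by rw [hmul]; ring
    rw [e1, e2]
  rw [Finset.sum_congr rfl hterm, Finset.sum_const, Finset.card_range, nsmul_eq_mul]
  push_cast
  ring

private lemma Cpm_zero_of_nosol (ψ : ℤ → ℤ) (η : ℕ) (n m : ℤ)
    (h : ∀ a : ℕ, a < 2^η →
      ¬(Nat.Coprime a (2^η) ∧ (a:ℤ)*n ≡ m [ZMOD ((2:ℤ)^η)])) : Cpm ψ n m η = 0 := by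
  unfold Cpm
  apply Finset.sum_eq_zero
  intro a ha
  rw [if_neg (h a (Finset.mem_range.mp ha))]

/-- evaluation of `C_±(n,m;2^η)` for odd `η ≥ 5`. -/
theorem Cpm_odd_eta (η : ℕ) (hη : 5 ≤ η) (hodd : Odd η) (n m : ℤ) :
    (∀ j : ℕ, ∀ nstar mstar : ℤ, n = 2 ^ j * nstar → m = 2 ^ j * mstar →
      Odd nstar → Odd mstar → j + 2 < η →
        Cpm (psiPlus η) n m η = psiPlus η (nstar * mstar) * 2 ^ j ∧
        Cpm (psiMinus η) n m η = psiMinus η (nstar * mstar) * 2 ^ j) ∧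
    ((¬ ∃ j : ℕ, ∃ nstar mstar : ℤ, n = 2 ^ j * nstar ∧ m = 2 ^ j * mstar ∧
        Odd nstar ∧ Odd mstar ∧ j + 2 < η) →
      Cpm (psiPlus η) n m η = 0 ∧ Cpm (psiMinus η) n m η = 0) := by
  have hodd' : ¬ Even η := Nat.not_even_iff_odd.mpr hodd
  have hPlusEq : ∀ a : ℤ, psiPlus η a = ZMod.χ₈ (a : ZMod 8) := fun a => if_neg hodd'
  have hMinusEq : ∀ a : ℤ, psiMinus η a = ZMod.χ₈ (a:ZMod 8) * ZMod.χ₄ (a:ZMod 4) :=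
    fun a => by rw [psiMinus, hPlusEq]
  have hperP : ∀ a b : ℤ, (8:ℤ) ∣ b - a → psiPlus η a = psiPlus η b := by
    intro a b h
    rw [hPlusEq, hPlusEq]
    congr 1
    exact (ZMod.intCast_eq_intCast_iff_dvd_sub a b 8).mpr (by exact_mod_cast h)
  have hperM : ∀ a b : ℤ, (8:ℤ) ∣ b - a → psiMinus η a = psiMinus η b := by
    intro a b h
    rw [hMinusEq, hMinusEq]
    have h4 : (4:ℤ) ∣ b - a := dvd_trans (by norm_num) h
    rw [(ZMod.intCast_eq_intCast_iff_dvd_sub a b 8).mpr (by exact_mod_cast h),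
      (ZMod.intCast_eq_intCast_iff_dvd_sub a b 4).mpr (by exact_mod_cast h4)]
  have hflipP : ∀ a : ℤ, psiPlus η (a+4) = -psiPlus η a := by
    intro a
    rw [hPlusEq, hPlusEq]
    have hcast : ((a+4 : ℤ) : ZMod 8) = (a : ZMod 8) + 4 := by push_cast; ring
    rw [hcast, chi8_flip]
  have hflipM : ∀ a : ℤ, psiMinus η (a+4) = -psiMinus η a := by
    intro a
    rw [hMinusEq, hMinusEq]
    have hcast : ((a+4 : ℤ) : ZMod 8) = (a : ZMod 8) + 4 := by push_cast; ring
    have hcast4 : ((a+4 : ℤ) : ZMod 4) = (a : ZMod 4) := by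
      push_cast
      have h40 : (4 : ZMod 4) = 0 := by decide
      rw [h40, add_zero]
    rw [hcast, hcast4, chi8_flip]
    ring
  have hmulP : ∀ a b : ℤ, psiPlus η (a*b) = psiPlus η a * psiPlus η b := by
    intro a b
    rw [hPlusEq, hPlusEq, hPlusEq]
    push_cast
    rw [map_mul]
  have hmulM : ∀ a b : ℤ, psiMinus η (a*b) = psiMinus η a * psiMinus η b := by
    intro a b
    rw [hMinusEq, hMinusEq, hMinusEq]
    push_cast
    rw [map_mul, map_mul]
    ring
  have hsqP : ∀ a : ℤ, Odd a → psiPlus η a * psiPlus η a = 1 := by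
    rintro a ⟨k, rfl⟩
    rw [hPlusEq]
    have hcast : ((2*k+1 : ℤ) : ZMod 8) = 2*(k : ZMod 8)+1 := by push_cast; ring
    rw [hcast]
    exact chi8_sq _
  have hsqM : ∀ a : ℤ, Odd a → psiMinus η a * psiMinus η a = 1 := by
    rintro a ⟨k, rfl⟩
    rw [hMinusEq]
    have hcast : ((2*k+1 : ℤ) : ZMod 8) = 2*(k : ZMod 8)+1 := by push_cast; ring
    have hcast4 : ((2*k+1 : ℤ) : ZMod 4) = 2*(k : ZMod 4)+1 := by push_cast; ring
    rw [hcast, hcast4]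
    have := chi8_sq (k : ZMod 8)
    have := chi4_sq (k : ZMod 4)
    nlinarith [chi8_sq (k : ZMod 8), chi4_sq (k : ZMod 4)]
  constructor
  · rintro j nstar mstar rfl rfl hns hms hj
    exact ⟨Cpm_eval _ hperP hmulP hsqP η j _ _ hns hms hj,
           Cpm_eval _ hperM hmulM hsqM η j _ _ hns hms hj⟩
  · intro hne
    by_cases hn0 : n = 0
    · subst hn0
      have hdvd : (2:ℤ)^η ∣ 4*0 := by simp
      exact ⟨Cpm_vanish _ hflipP η hη _ _ hdvd, Cpm_vanish _ hflipM η hη _ _ hdvd⟩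
    · obtain ⟨j, w, hwodd, hw⟩ := Nat.exists_eq_two_pow_mul_odd (Int.natAbs_ne_zero.mpr hn0)
      have hn' : ∃ nstar : ℤ, Odd nstar ∧ n = 2^j * nstar := by
        rcases Int.natAbs_eq n with h | h
        · exact ⟨(w:ℤ), Int.odd_coe_nat w |>.mpr hwodd, by rw [h, hw]; push_cast; ring⟩
        · exact ⟨-(w:ℤ), (Int.odd_coe_nat w |>.mpr hwodd).neg, by rw [h, hw]; push_cast; ring⟩
      obtain ⟨nstar, hnsodd, hneq⟩ := hn'
      by_cases hjb : j + 2 < η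
      · have hnosol : ∀ a : ℕ, a < 2^η →
            ¬(Nat.Coprime a (2^η) ∧ (a:ℤ)*n ≡ m [ZMOD ((2:ℤ)^η)]) := by
          rintro a _ ⟨hcop, hmod⟩
          have haodd : Odd a := (cop_iff η (by omega) a).mp hcop
          obtain ⟨t, ht⟩ := Int.ModEq.dvd hmod
          rw [hneq] at ht
          apply hne
          have hpow : (2:ℤ)^η = 2^j * 2^(η-j) := by rw [← pow_add]; congr 1; omega
          refine ⟨j, nstar, (a:ℤ)*nstar + 2^(η-j)*t, hneq, ?_, hnsodd, ?_, hjb⟩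
          · linear_combination ht + t * hpow
          · have h2 : (2:ℤ) ∣ (2:ℤ)^(η-j) := dvd_pow_self 2 (by omega)
            obtain ⟨e, he⟩ := h2
            obtain ⟨p, hp⟩ := (Int.odd_coe_nat a).mpr haodd
            obtain ⟨q, hq⟩ := hnsodd
            exact ⟨2*p*q+p+q+e*t, by rw [hp, hq, he]; ring⟩
        exact ⟨Cpm_zero_of_nosol _ η n m hnosol, Cpm_zero_of_nosol _ η n m hnosol⟩
      · have hdvd : (2:ℤ)^η ∣ 4*n := by
          rw [hneq]
          have h1 : (2:ℤ)^η ∣ 2^(j+2) := pow_dvd_pow 2 (by omega)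
          have h2 : (2:ℤ)^(j+2) = 4*2^j := by rw [pow_add]; ring
          rw [show (4:ℤ)*(2^j*nstar) = (4*2^j)*nstar by ring, ← h2]
          exact h1.mul_right nstar
        exact ⟨Cpm_vanish _ hflipP η hη n m hdvd, Cpm_vanish _ hflipM η hη n m hdvd⟩
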